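/- Let u be a map from S¹ into a coordinate chart of a compact Riemannian manifold N where the Christoffel symbols are bounded by C_N. If |u_θ| ≤ η with η sufficiently small (depending on C_N), then ∫_{S¹}|∇_θ u_θ|² dθ ≥ (1 − Cη) ∫_{S¹}|u_θ|² dθ, i.e. a Poincaré inequality holds for the covariant derivative of the nonconstant Fourier modes up to a curvature error. -/
import Mathlib


/-- Poincaré inequality with curvature error.  Let `w = u_θ` be the angular
derivative of a loop `u : S¹ → N` landing in a single coordinate chart of a compact
Riemannian manifold whose Christoffel symbols are bounded by `C_N`, so that
`∇_θ u_θ = ∂_θ u_θ + Γ(u_θ, u_θ)` with `‖Γ(u_θ,u_θ)‖ ≤ C_N ‖u_θ‖²`, and suppose the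
classical Poincaré inequality `∫_{S¹} |∂_θ w|² ≥ ∫_{S¹} |w|²` holds for the mean-zero
field `w`.  If `‖w‖ ≤ η` pointwise with `η` sufficiently small (depending on `C_N`),
then `∫_{S¹} |∇_θ u_θ|² ≥ (1 − Cη) ∫_{S¹} |u_θ|²`. -/
theorem stmt17 (CN : ℝ) (hCN : 0 < CN) :
    ∃ η₀ > (0 : ℝ), ∃ C > (0 : ℝ),
      ∀ (E : Type) (_ : NormedAddCommGroup E) (_ : InnerProductSpace ℝ E)
        (w w' Γv : ℝ → E) (η : ℝ),
        0 < η → η ≤ η₀ →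
        (∀ θ, HasDerivAt w (w' θ) θ) →
        (∀ θ, ‖Γv θ‖ ≤ CN * ‖w θ‖ ^ 2) →
        (∀ θ, ‖w θ‖ ≤ η) →
        IntervalIntegrable (fun θ => ‖w θ‖ ^ 2) MeasureTheory.volume 0 (2 * Real.pi) →
        IntervalIntegrable (fun θ => ‖w' θ‖ ^ 2) MeasureTheory.volume 0 (2 * Real.pi) →
        IntervalIntegrable (fun θ => ‖w' θ + Γv θ‖ ^ 2) MeasureTheory.volume 0
          (2 * Real.pi) →
        ((∫ θ in (0 : ℝ)..(2 * Real.pi), ‖w θ‖ ^ 2) ≤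
          ∫ θ in (0 : ℝ)..(2 * Real.pi), ‖w' θ‖ ^ 2) →
        (1 - C * η) * (∫ θ in (0 : ℝ)..(2 * Real.pi), ‖w θ‖ ^ 2) ≤
          ∫ θ in (0 : ℝ)..(2 * Real.pi), ‖w' θ + Γv θ‖ ^ 2 := by

  refine ⟨1, one_pos, 1 + 2 * CN ^ 2, by positivity, ?_⟩
  intro E _ _ w w' Γv η hη hη1 _ hΓ hwη hIw hIw' hIS hP
  set a := (2 : ℝ) * Real.pi
  -- pointwise bound
  have key : ∀ θ, (1 - η) * ‖w' θ‖ ^ 2 - (2 * CN ^ 2 * η) * ‖w θ‖ ^ 2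
      ≤ ‖w' θ + Γv θ‖ ^ 2 := by
    intro θ
    set S := ‖w' θ + Γv θ‖ with hS
    set A := ‖w' θ‖ with hA
    set B := ‖Γv θ‖ with hB
    set W := ‖w θ‖ with hW
    have h0 : (0:ℝ) ≤ S := norm_nonneg _
    have h1 : (0:ℝ) ≤ B := norm_nonneg _
    have h2 : (0:ℝ) ≤ W := norm_nonneg _
    have h3 : (0:ℝ) ≤ A := norm_nonneg _
    have hWη : W ≤ η := hwη θ
    have hBW : B ≤ CN * η * W := by
      calc B ≤ CN * W ^ 2 := hΓ θ
        _ = CN * W * W := by ring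
        _ ≤ CN * η * W := mul_le_mul_of_nonneg_right (mul_le_mul_of_nonneg_left hWη hCN.le) h2
    have hAS : A ≤ S + B := by
      have : w' θ = (w' θ + Γv θ) - Γv θ := by abel
      rw [hA, this]; exact norm_sub_le _ _
    have h1η : (0:ℝ) ≤ 1 - η := by linarith
    have hA2 : A ^ 2 ≤ (S + B) ^ 2 := by nlinarith
    have hB2 : B ^ 2 ≤ CN ^ 2 * η ^ 2 * W ^ 2 := by nlinarith
    have h2SB : 2 * (S * B) * η ≤ η ^ 2 * S ^ 2 + B ^ 2 := by
      nlinarith [sq_nonneg (η * S - B)]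
    have step : η * (1 - η) * A ^ 2 ≤ η * S ^ 2 + B ^ 2 := by
      nlinarith [mul_le_mul_of_nonneg_left hA2 (mul_nonneg hη.le h1η),
        mul_le_mul_of_nonneg_left h2SB h1η,
        mul_nonneg (mul_nonneg (mul_nonneg hη.le hη.le) hη.le) (sq_nonneg S),
        mul_nonneg (mul_nonneg hη.le hη.le) (sq_nonneg B)]
    nlinarith [mul_pos hη hη, sq_nonneg W]
  -- integrate
  have hf : IntervalIntegrable
      (fun θ => (1 - η) * ‖w' θ‖ ^ 2 - (2 * CN ^ 2 * η) * ‖w θ‖ ^ 2)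
      MeasureTheory.volume 0 a := (hIw'.const_mul _).sub (hIw.const_mul _)
  have hmono : (∫ θ in (0:ℝ)..a, ((1 - η) * ‖w' θ‖ ^ 2 - (2 * CN ^ 2 * η) * ‖w θ‖ ^ 2))
      ≤ ∫ θ in (0:ℝ)..a, ‖w' θ + Γv θ‖ ^ 2 := by
    apply intervalIntegral.integral_mono_on (by positivity) hf hIS
    intro θ _; exact key θ
  have hsplit : (∫ θ in (0:ℝ)..a, ((1 - η) * ‖w' θ‖ ^ 2 - (2 * CN ^ 2 * η) * ‖w θ‖ ^ 2))
      = (1 - η) * (∫ θ in (0:ℝ)..a, ‖w' θ‖ ^ 2)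
        - (2 * CN ^ 2 * η) * (∫ θ in (0:ℝ)..a, ‖w θ‖ ^ 2) := by
    rw [intervalIntegral.integral_sub (hIw'.const_mul _) (hIw.const_mul _),
      intervalIntegral.integral_const_mul, intervalIntegral.integral_const_mul]
  have hwnn : (0:ℝ) ≤ ∫ θ in (0:ℝ)..a, ‖w θ‖ ^ 2 := by
    apply intervalIntegral.integral_nonneg (by positivity)
    intro θ _; positivity
  have h1η : (0:ℝ) ≤ 1 - η := by linarith
  nlinarith [mul_le_mul_of_nonneg_left hP h1η]
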